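/- Let F be the free group on the disjoint union K ⊔ L of two finite nonempty sets, and let f : ℕ → ℕ be any strictly increasing function. Then there exist a descending chain G_1 ⊇ G_2 ⊇ ⋯ of finite-index normal subgroups of F such that every finite-index normal subgroup of F contains some G_m, and elements r_m ∈ ⟨K⟩ (the subgroup generated by K) such that: (1) every element of the coset G_m r_m has reduced word length (with respect to the generators K ⊔ L) greater than f(m); and (2) for all k > m, the cosets G_m r_k and G_m r_m are distinct. -/

import Mathlib

open scoped Pointwise

private lemma prodBound {α : Type} (g : α → Multiplicative ℤ)
    (hg : ∀ x, g x = Multiplicative.ofAdd 1) :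
    ∀ l : List (α × Bool),
      |Multiplicative.toAdd (List.prod (l.map fun x => cond x.2 (g x.1) (g x.1)⁻¹))|
        ≤ (l.length : ℤ)
  | [] => by simp
  | x :: l => by
    simp only [List.map_cons, List.prod_cons, List.length_cons, toAdd_mul]
    have h2 := prodBound g hg l
    have h1 : |Multiplicative.toAdd (cond x.2 (g x.1) (g x.1)⁻¹)| ≤ 1 := by
      cases x.2 <;> simp [hg]
    have h3 := abs_add_le (Multiplicative.toAdd (cond x.2 (g x.1) (g x.1)⁻¹))
      (Multiplicative.toAdd (List.prod (l.map fun x => cond x.2 (g x.1) (g x.1)⁻¹)))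
    push_cast
    linarith

/-- The exponent-sum homomorphism on a free group. -/
private def sigmaHom (α : Type) : FreeGroup α →* Multiplicative ℤ :=
  FreeGroup.lift fun _ => Multiplicative.ofAdd 1

private lemma abs_sigma_le {α : Type} [DecidableEq α] (g : FreeGroup α) :
    |Multiplicative.toAdd (sigmaHom α g)| ≤ (g.norm : ℤ) := by
  conv_lhs => rw [← FreeGroup.mk_toWord (x := g)]
  rw [sigmaHom, FreeGroup.lift_mk]
  exact prodBound _ (fun _ => rfl) _

private lemma sigma_pow {α : Type} (x : α) (t : ℕ) :
    Multiplicative.toAdd (sigmaHom α (FreeGroup.of x ^ t)) = (t : ℤ) := by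
  simp [sigmaHom, map_pow, FreeGroup.lift_apply_of]

private def psiKer (α : Type) (q : ℕ) : Subgroup (FreeGroup α) :=
  ((AddMonoidHom.toMultiplicative (Int.castAddHom (ZMod q))).comp (sigmaHom α)).ker

private lemma psiKer_normal (α : Type) (q : ℕ) : (psiKer α q).Normal :=
  MonoidHom.normal_ker _

private lemma psiKer_finiteIndex (α : Type) (q : ℕ) [NeZero q] :
    (psiKer α q).FiniteIndex := by
  unfold psiKer
  infer_instance

private lemma mem_psiKer {α : Type} {q : ℕ} [NeZero q] (x : FreeGroup α) :
    x ∈ psiKer α q ↔ (q : ℤ) ∣ Multiplicative.toAdd (sigmaHom α x) := by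
  rw [psiKer, MonoidHom.mem_ker, MonoidHom.comp_apply]
  rw [show (AddMonoidHom.toMultiplicative (Int.castAddHom (ZMod q))) (sigmaHom α x)
      = Multiplicative.ofAdd ((Multiplicative.toAdd (sigmaHom α x) : ℤ) : ZMod q) from rfl]
  rw [show (1 : Multiplicative (ZMod q)) = Multiplicative.ofAdd (0 : ZMod q) from rfl]
  rw [Multiplicative.ofAdd.injective.eq_iff]
  exact ZMod.intCast_zmod_eq_zero_iff_dvd _ q

private lemma ker_comp_injective {G H K' : Type*} [Group G] [Group H] [Group K']
    (g : G →* H) (h : H →* K') (hinj : Function.Injective h) :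
    (h.comp g).ker = g.ker := by
  ext x
  simp only [MonoidHom.mem_ker, MonoidHom.comp_apply]
  exact ⟨fun hx => hinj (by rw [hx, map_one]), fun hx => by rw [hx, map_one]⟩

/-- Cayley: every finite-index normal subgroup is the kernel of a map into a
finite permutation group. -/
private lemma exists_perm_hom_ker {G : Type} [Group G] (N : Subgroup G)
    [N.Normal] [N.FiniteIndex] :
    ∃ (nn : ℕ) (χ : G →* Equiv.Perm (Fin nn)), χ.ker = N := by
  let Q := G ⧸ N
  let c : Q →* Equiv.Perm Q := MulAction.toPermHom Q Q
  have hc : Function.Injective c := MulAction.toPerm_injective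
  let ι : Q ↪ Fin (Nat.card Q) := (Finite.equivFin Q).toEmbedding
  let d : Equiv.Perm Q →* Equiv.Perm (Fin (Nat.card Q)) := Equiv.Perm.viaEmbeddingHom ι
  have hd : Function.Injective d := Equiv.Perm.viaEmbeddingHom_injective ι
  refine ⟨Nat.card Q, (d.comp c).comp (QuotientGroup.mk' N), ?_⟩
  rw [ker_comp_injective _ (d.comp c) ?_]
  · exact QuotientGroup.ker_mk' N
  · rw [MonoidHom.coe_comp]
    exact hd.comp hc

/-- Iterated intersections of a sequence of subgroups. -/
private def interChain {G : Type} [Group G] (B : ℕ → Subgroup G) : ℕ → Subgroup G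
  | 0 => B 0
  | m + 1 => interChain B m ⊓ B (m + 1)

private lemma interChain_antitone {G : Type} [Group G] (B : ℕ → Subgroup G) (m : ℕ) :
    interChain B (m + 1) ≤ interChain B m := inf_le_left

private lemma interChain_le {G : Type} [Group G] (B : ℕ → Subgroup G) :
    ∀ m i, i ≤ m → interChain B m ≤ B i := by
  intro m
  induction m with
  | zero => intro i hi; rw [Nat.le_zero.mp hi]; exact le_rfl
  | succ m ih =>
    intro i hi
    rcases Nat.lt_or_ge i (m + 1) with h | h
    · exact le_trans inf_le_left (ih i (Nat.lt_succ_iff.mp h))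
    · rw [Nat.le_antisymm hi h]; exact inf_le_right

private lemma interChain_normal {G : Type} [Group G] (B : ℕ → Subgroup G)
    (hB : ∀ i, (B i).Normal) : ∀ m, (interChain B m).Normal := by
  intro m
  induction m with
  | zero => exact hB 0
  | succ m ih =>
    haveI := ih; haveI := hB (m + 1)
    exact Subgroup.normal_inf_normal _ _

private lemma interChain_finiteIndex {G : Type} [Group G] (B : ℕ → Subgroup G)
    (hB : ∀ i, (B i).FiniteIndex) : ∀ m, (interChain B m).FiniteIndex := by
  intro m
  induction m with
  | zero => exact hB 0
  | succ m ih =>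
    haveI := ih; haveI := hB (m + 1)
    show (interChain B m ⊓ B (m + 1)).FiniteIndex
    infer_instance

theorem exists_cofinal_chain_and_far_coset_representatives
    (K L : Type) [Fintype K] [Fintype L] [Nonempty K] [Nonempty L]
    [DecidableEq K] [DecidableEq L]
    (f : ℕ → ℕ) (hf : StrictMono f) :
    ∃ (G : ℕ → Subgroup (FreeGroup (K ⊕ L))) (r : ℕ → FreeGroup (K ⊕ L)),
      (∀ m : ℕ, G (m + 1) ≤ G m) ∧
      (∀ m : ℕ, (G m).Normal) ∧
      (∀ m : ℕ, (G m).FiniteIndex) ∧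
      (∀ N : Subgroup (FreeGroup (K ⊕ L)), N.Normal → N.FiniteIndex →
        ∃ m : ℕ, G m ≤ N) ∧
      (∀ m : ℕ, r m ∈ Subgroup.closure
        (Set.range fun k : K => FreeGroup.of (Sum.inl k : K ⊕ L))) ∧
      (∀ m : ℕ, ∀ g : FreeGroup (K ⊕ L), g * (r m)⁻¹ ∈ G m →
        f m < FreeGroup.norm g) ∧
      (∀ m k : ℕ, m < k → r k * (r m)⁻¹ ∉ G m) := by
  classical
  obtain ⟨k0⟩ := ‹Nonempty K›
  set F := FreeGroup (K ⊕ L) with hF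
  let a : F := FreeGroup.of (Sum.inl k0)
  -- length exponents
  let e : ℕ → ℕ := fun m => f m + m + 1
  have he : StrictMono e := fun i j hij => by
    have := hf hij; simp only [e]; omega
  have hfe : ∀ m, f m < 2 ^ e m := fun m =>
    lt_of_lt_of_le (by simp only [e]; omega) (Nat.le_of_lt (Nat.lt_two_pow_self))
  haveI hq : ∀ m, NeZero (2 ^ (e m + 1)) := fun m => ⟨pow_ne_zero _ two_ne_zero⟩
  -- enumeration of finite-index normal subgroups via kernels into permutation groups
  let T := Σ nn : ℕ, ((K ⊕ L) → Equiv.Perm (Fin nn))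
  haveI : Nonempty T := ⟨⟨0, fun _ => 1⟩⟩
  obtain ⟨u, hu⟩ := exists_surjective_nat T
  let N : ℕ → Subgroup F := fun i => (FreeGroup.lift (u i).2).ker
  have hNnorm : ∀ i, (N i).Normal := fun i => MonoidHom.normal_ker _
  have hNfin : ∀ i, (N i).FiniteIndex := fun i => by
    haveI : Finite (MonoidHom.range (FreeGroup.lift (u i).2)) := Subtype.finite
    exact Subgroup.finiteIndex_ker _
  -- the chain
  let B : ℕ → Subgroup F := fun m => N m ⊓ psiKer (K ⊕ L) (2 ^ (e m + 1))
  have hBnorm : ∀ m, (B m).Normal := fun m => by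
    haveI := hNnorm m; haveI := psiKer_normal (K ⊕ L) (2 ^ (e m + 1))
    exact Subgroup.normal_inf_normal _ _
  have hBfin : ∀ m, (B m).FiniteIndex := fun m => by
    haveI := hNfin m; haveI := psiKer_finiteIndex (K ⊕ L) (2 ^ (e m + 1))
    infer_instance
  let G : ℕ → Subgroup F := interChain B
  have hGpsi : ∀ m, G m ≤ psiKer (K ⊕ L) (2 ^ (e m + 1)) := fun m =>
    le_trans (interChain_le B m m le_rfl) inf_le_right
  -- the representatives
  let r : ℕ → F := fun m => a ^ (2 ^ e m)
  refine ⟨G, r, fun m => interChain_antitone B m, interChain_normal B hBnorm,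
    interChain_finiteIndex B hBfin, ?_, ?_, ?_, ?_⟩
  · -- cofinality
    intro N' hnorm hfin
    haveI := hnorm; haveI := hfin
    obtain ⟨nn, χ, hχ⟩ := exists_perm_hom_ker N'
    obtain ⟨i, hi⟩ := hu ⟨nn, fun x => χ (FreeGroup.of x)⟩
    refine ⟨i, le_trans (le_trans (interChain_le B i i le_rfl) inf_le_left) ?_⟩
    have : N i = χ.ker := by
      show (FreeGroup.lift (u i).2).ker = χ.ker
      rw [hi]
      congr 1
      exact FreeGroup.ext_hom _ _ (fun x => by rw [FreeGroup.lift_apply_of])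
    rw [this, hχ]
  · -- r m lies in ⟨K⟩
    intro m
    exact Subgroup.pow_mem _
      (Subgroup.subset_closure (Set.mem_range_self k0)) _
  · -- elements of the coset are long
    intro m g hg
    by_contra hle
    push_neg at hle
    have hmem := (mem_psiKer (q := 2 ^ (e m + 1)) _).mp (hGpsi m hg)
    have hs : Multiplicative.toAdd (sigmaHom (K ⊕ L) (g * (r m)⁻¹))
        = Multiplicative.toAdd (sigmaHom (K ⊕ L) g) - (2 ^ e m : ℤ) := by
      rw [map_mul, map_inv, toAdd_mul, toAdd_inv]
      congr 1
      rw [show sigmaHom (K ⊕ L) (r m) = sigmaHom (K ⊕ L) (FreeGroup.of (Sum.inl k0) ^ 2 ^ e m)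
        from rfl]
      rw [show Multiplicative.toAdd (sigmaHom (K ⊕ L)
        (FreeGroup.of (Sum.inl (α := K) (β := L) k0) ^ 2 ^ e m)) = ((2 ^ e m : ℕ) : ℤ) from
        sigma_pow _ _]
      push_cast
      ring
    rw [hs] at hmem
    set s : ℤ := Multiplicative.toAdd (sigmaHom (K ⊕ L) g) with hsdef
    have hq' : ((2 ^ (e m + 1) : ℕ) : ℤ) = 2 * 2 ^ e m := by push_cast [pow_succ]; ring
    rw [hq'] at hmem
    have habs : |s| ≤ (f m : ℤ) :=
      le_trans (abs_sigma_le g) (by exact_mod_cast hle)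
    have habs' := abs_le.mp habs
    have hfm : (f m : ℤ) < 2 ^ e m := by exact_mod_cast hfe m
    have h1 : (2 * (2 : ℤ) ^ e m) ∣ ((2 : ℤ) ^ e m - s) := (dvd_sub_comm).mp hmem
    have hpos : 0 < (2 : ℤ) ^ e m - s := by linarith [habs'.1, habs'.2]
    have hled := Int.le_of_dvd hpos h1
    linarith [habs'.1, habs'.2]
  · -- distinct cosets
    intro m k hmk hmem
    have hd := (mem_psiKer (q := 2 ^ (e m + 1)) _).mp (hGpsi m hmem)
    have hs : Multiplicative.toAdd (sigmaHom (K ⊕ L) (r k * (r m)⁻¹))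
        = (2 ^ e k : ℤ) - (2 ^ e m : ℤ) := by
      rw [map_mul, map_inv, toAdd_mul, toAdd_inv]
      have h1 : Multiplicative.toAdd (sigmaHom (K ⊕ L) (r k)) = ((2 ^ e k : ℕ) : ℤ) :=
        sigma_pow _ _
      have h2 : Multiplicative.toAdd (sigmaHom (K ⊕ L) (r m)) = ((2 ^ e m : ℕ) : ℤ) :=
        sigma_pow _ _
      rw [h1, h2]
      push_cast
      ring
    rw [hs] at hd
    -- 2 ^ (e m + 1) does not divide 2 ^ e k - 2 ^ e m
    have hek : e m < e k := he hmk
    have hfac : (2 ^ e k : ℤ) - 2 ^ e m = 2 ^ e m * (2 ^ (e k - e m) - 1) := by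
      rw [mul_sub, mul_one, ← pow_add]
      congr 2
      omega
    have hd2 : ((2 : ℤ) ^ e m * 2) ∣ (2 ^ e m * (2 ^ (e k - e m) - 1)) := by
      rw [← hfac]
      have : ((2 : ℕ) ^ (e m + 1) : ℤ) = (2 : ℤ) ^ e m * 2 := by push_cast [pow_succ]; ring
      rw [← this]
      exact_mod_cast hd
    have hd3 : (2 : ℤ) ∣ (2 ^ (e k - e m) - 1) :=
      (mul_dvd_mul_iff_left (a := (2:ℤ) ^ e m) (pow_ne_zero _ two_ne_zero)).mp hd2
    have hd4 : (2 : ℤ) ∣ (2 : ℤ) ^ (e k - e m) :=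
      dvd_pow_self 2 (by omega)
    obtain ⟨c1, hc1⟩ := hd3
    obtain ⟨c2, hc2⟩ := hd4
    omega
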